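/- Let φ : G → G' be a half-isomorphism of groups and x, y ∈ G. If φ(xy) = φ(x)φ(y), then φ(yx) = φ(y)φ(x). -/
import Mathlib


theorem stmt_2 {G G' : Type*} [Group G] [Group G'] (φ : G → G')
    (hbij : Function.Bijective φ)
    (hhalf : ∀ x y : G, φ (x * y) = φ x * φ y ∨ φ (x * y) = φ y * φ x)
    (x y : G) (h : φ (x * y) = φ x * φ y) :
    φ (y * x) = φ y * φ x := by
  rcases hhalf y x with h1 | h1
  · exact h1
  -- φ (y*x) = φ x * φ y = φ (x*y), so by injectivity y*x = x*y
  have hc : y * x = x * y := hbij.1 (h1.trans h.symm)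
  rw [h1]
  set A := φ x with hA
  set B := φ y with hB
  -- suffices to show A * B = B * A
  by_contra hne
  have hne' : A * B ≠ B * A := fun hh => hne hh
  -- φ (x*x) = A*A
  have hxx : φ (x * x) = A * A := (hhalf x x).elim id id
  -- φ (x*x*y) = A*A*B
  have hxxy : φ (x * x * y) = A * A * B := by
    have e1 := hhalf (x * x) y
    rw [hxx] at e1
    have e2 := hhalf x (x * y)
    rw [h, ← mul_assoc] at e2
    rcases e1 with e1 | e1 <;> rcases e2 with e2 | e2
    · exact e1
    · exact e1
    · rw [e2, mul_assoc]
    · -- B*(A*A) = (A*B)*A forces A*B = B*A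
      exfalso
      apply hne'
      have e : B * A * A = A * B * A := by
        rw [mul_assoc]; exact e1.symm.trans e2
      exact (mul_right_cancel e).symm
  -- φ (x*y*(x*y)) = A*B*(A*B)
  have hsq : φ (x * y * (x * y)) = A * B * (A * B) := by
    have := hhalf (x * y) (x * y)
    rw [h] at this
    exact this.elim id id
  have hrw : x * y * (x * y) = x * x * y * y := by
    calc x * y * (x * y) = x * (y * x) * y := by group
    _ = x * (x * y) * y := by rw [hc]
    _ = x * x * y * y := by group
  rw [hrw] at hsq
  have e3 := hhalf (x * x * y) y
  rw [hxxy, hsq, ← hB] at e3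
  apply hne'
  rcases e3 with e3 | e3
  · -- A*B*(A*B) = A*A*B*B
    have e : A * B * A * B = A * A * B * B := by
      rw [← mul_assoc] at e3; exact e3
    have e' : A * (B * A) = A * (A * B) := by
      have := mul_right_cancel e
      rw [mul_assoc, mul_assoc] at this; exact this
    exact (mul_left_cancel e').symm
  · -- A*B*(A*B) = B*(A*A*B)
    have e : A * B * A * B = B * (A * A) * B := by
      rw [← mul_assoc] at e3
      rw [mul_assoc B (A*A) B]
      exact e3
    have e' : A * B * A = B * A * A := by
      have := mul_right_cancel e
      rw [← mul_assoc] at this; exact this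
    exact mul_right_cancel e'
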